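/- Let B⁻ be an in-branching rooted at r in a digraph D, let A ⊆ V(D) \ {r} be a set of vertices such that ur ∈ A(D) for the predecessor u (on the path to r in B⁻) of every vertex of A appearing on such paths. Then there exists an in-tree rooted at r spanning V(D) \ A whose arc set is contained in A(B⁻) ∪ {ur : u ∈ V(D) \ A}; i.e., one can 'shortcut' around vertices of A by rerouting their predecessors directly to r. -/
import Mathlib


variable {V : Type*}

/-- A digraph (given by its arc relation) is strongly connected. -/
def Strong (A : V → V → Prop) : Prop :=
  ∀ x y : V, Relation.ReflTransGen A x y

/-- `B` is an out-branching of the digraph `A` rooted at `r`: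
a spanning subdigraph in which every vertex is reachable from `r`,
every vertex other than `r` has in-degree exactly one, and `r` has in-degree zero. -/
def IsOutBranching (A B : V → V → Prop) (r : V) : Prop :=
  (∀ x y, B x y → A x y) ∧
  (∀ v, Relation.ReflTransGen B r v) ∧
  (∀ v, v ≠ r → Nat.card {u : V // B u v} = 1) ∧
  (∀ u, ¬ B u r)

/-- `B` is an in-branching of the digraph `A` rooted at `r`. -/
def IsInBranching (A B : V → V → Prop) (r : V) : Prop :=
  (∀ x y, B x y → A x y) ∧
  (∀ v, Relation.ReflTransGen B v r) ∧
  (∀ v, v ≠ r → Nat.card {u : V // B v u} = 1) ∧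
  (∀ u, ¬ B r u)

/-- A good pair rooted at `r`: arc-disjoint out- and in-branchings rooted at `r`. -/
def GoodPair (A : V → V → Prop) (r : V) : Prop :=
  ∃ Bp Bm : V → V → Prop, IsOutBranching A Bp r ∧ IsInBranching A Bm r ∧
    ∀ x y, ¬ (Bp x y ∧ Bm x y)

/-- Arc relation of the composition `T[H_1, …, H_t]`. -/
def CompArc {t : ℕ} (T : Fin t → Fin t → Prop) (n : Fin t → ℕ)
    (H : ∀ i : Fin t, Fin (n i) → Fin (n i) → Prop)
    (x y : (i : Fin t) × Fin (n i)) : Prop :=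
  (∃ h : x.1 = y.1, H y.1 (h ▸ x.2) y.2) ∨ (x.1 ≠ y.1 ∧ T x.1 y.1)

/-- A semicomplete digraph: some arc between every pair of distinct vertices. -/
def Semicomplete {α : Type*} (T : α → α → Prop) : Prop :=
  ∀ x y : α, x ≠ y → T x y ∨ T y x

/-- Rerouting lemma: given an in-branching `Bm` of `D` rooted at `r` and a set
`A` of vertices avoiding `r` such that every `Bm`-predecessor of a vertex of
`A` has an arc of `D` directly to `r`, there is an in-branching of `D − A`
rooted at `r` all of whose arcs are arcs of `Bm` or arcs with head `r`. -/
theorem stmt15 [Fintype V] (D Bm : V → V → Prop) (r : V)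
    (hBm : IsInBranching D Bm r) (A : Set V) (hrA : r ∉ A)
    (hpred : ∀ u w, w ∈ A → Bm u w → D u r) :
    ∃ B' : {v : V // v ∉ A} → {v : V // v ∉ A} → Prop,
      IsInBranching (fun x y : {v : V // v ∉ A} => D x.1 y.1) B' ⟨r, hrA⟩ ∧
      ∀ x y : {v : V // v ∉ A}, B' x y → Bm x.1 y.1 ∨ y.1 = r := by
  obtain ⟨hsub, hreach, hcard, hroot⟩ := hBm
  -- unique successor extraction
  have hsucc : ∀ v : V, v ≠ r → ∃ u, Bm v u ∧ ∀ w, Bm v w → w = u := by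
    intro v hv
    have h1 := hcard v hv
    rw [Nat.card_eq_one_iff_exists] at h1
    obtain ⟨⟨u, hu⟩, huniq⟩ := h1
    exact ⟨u, hu, fun w hw => congrArg Subtype.val (huniq ⟨w, hw⟩)⟩
  refine ⟨fun x y => Bm x.1 y.1 ∨ (y.1 = r ∧ x.1 ≠ r ∧ ∃ w ∈ A, Bm x.1 w),
    ⟨?_, ?_, ?_, ?_⟩, ?_⟩
  · rintro x y (h | ⟨hy, hx, w, hwA, hw⟩)
    · exact hsub _ _ h
    · simpa [hy] using hpred x.1 w hwA hw
  · rintro ⟨v, hv⟩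
    have hr : Relation.ReflTransGen Bm v r := hreach v
    clear hsucc
    induction hr using Relation.ReflTransGen.head_induction_on with
    | refl => exact Relation.ReflTransGen.refl
    | head hbu hur ih =>
      rename_i u c
      by_cases hcA : c ∈ A
      · exact Relation.ReflTransGen.single
          (Or.inr ⟨rfl, fun h => hroot c (h ▸ hbu), c, hcA, hbu⟩)
      · exact Relation.ReflTransGen.head (Or.inl hbu) (ih hcA)
  · rintro ⟨v, hv⟩ hvr
    have hvr' : v ≠ r := fun h => hvr (Subtype.ext h)
    obtain ⟨u, hu, huniq⟩ := hsucc v hvr'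
    rw [Nat.card_eq_one_iff_exists]
    by_cases huA : u ∈ A
    · refine ⟨⟨⟨r, hrA⟩, Or.inr ⟨rfl, hvr', u, huA, hu⟩⟩, ?_⟩
      rintro ⟨⟨y, hy⟩, (h | ⟨h, -, -⟩)⟩
      · exact absurd ((huniq y h) ▸ hy) (fun h' => h' huA)
      · exact Subtype.ext (Subtype.ext h)
    · refine ⟨⟨⟨u, huA⟩, Or.inl hu⟩, ?_⟩
      rintro ⟨⟨y, hy⟩, (h | ⟨h, -, w, hwA, hw⟩)⟩
      · exact Subtype.ext (Subtype.ext (huniq y h))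
      · exact absurd ((huniq w hw) ▸ hwA) huA
  · rintro ⟨u, hu⟩ (h | ⟨-, h, -⟩)
    · exact hroot u h
    · exact h rfl
  · rintro x y (h | ⟨h, -, -⟩)
    · exact Or.inl h
    · exact Or.inr h
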